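/- For all real ω, ε, γ, the matrix A(ω,ε,γ) is G-Hamiltonian with the explicit matrix G₁: the 4×4 matrix G₁ with rows (0, -2iγ, 0, i), (2iγ, 0, i, 0), (0, -i, 0, 0), (-i, 0, 0, 0) is Hermitian and non-singular and satisfies A*G₁ + G₁A = 0, where A* denotes the conjugate transpose of A. -/

import Mathlib

open Matrix

/-- The coefficient matrix `A(ω,ε,γ)` of the coupled-oscillator system of Eq. (27)–(28),
viewed as a complex matrix with real entries. -/
noncomputable def Am (om ep ga : ℝ) : Matrix (Fin 4) (Fin 4) ℂ :=
  !![0, 0, 1, 0;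
     0, 0, 0, 1;
     -((om : ℂ) ^ 2), -(ep : ℂ), -2 * (ga : ℂ), 0;
     -(ep : ℂ), -((om : ℂ) ^ 2), 0, 2 * (ga : ℂ)]

/-- The explicit matrix `G₁` of Eq. (31) of the paper, depending on `γ`. -/
noncomputable def G1 (ga : ℝ) : Matrix (Fin 4) (Fin 4) ℂ :=
  !![0, -2 * Complex.I * (ga : ℂ), 0, Complex.I;
     2 * Complex.I * (ga : ℂ), 0, Complex.I, 0;
     0, -Complex.I, 0, 0;
     -Complex.I, 0, 0, 0]

/-- An explicit inverse of `G1 ga`. -/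
noncomputable def G1inv (ga : ℝ) : Matrix (Fin 4) (Fin 4) ℂ :=
  !![0, 0, 0, Complex.I;
     0, 0, Complex.I, 0;
     0, -Complex.I, 0, -2 * Complex.I * (ga : ℂ);
     -Complex.I, 0, 2 * Complex.I * (ga : ℂ), 0]

set_option maxHeartbeats 2000000 in
theorem G1_mul_G1inv (ga : ℝ) : G1 ga * G1inv ga = 1 := by
  rw [G1, G1inv]
  ext i j
  fin_cases i <;> fin_cases j <;>
    simp [Matrix.mul_apply, Fin.sum_univ_four, Matrix.vecHead, Matrix.vecTail,
      Matrix.one_apply] <;> ring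

set_option maxHeartbeats 2000000 in
theorem G1inv_mul_G1 (ga : ℝ) : G1inv ga * G1 ga = 1 := by
  rw [G1, G1inv]
  ext i j
  fin_cases i <;> fin_cases j <;>
    simp [Matrix.mul_apply, Fin.sum_univ_four, Matrix.vecHead, Matrix.vecTail,
      Matrix.one_apply] <;> ring

set_option maxHeartbeats 2000000 in
/-- For all real `ω, ε, γ`, the matrix `A(ω,ε,γ)` is G-Hamiltonian with the explicit
matrix `G₁`: `G₁` is Hermitian and non-singular and `A*G₁ + G₁A = 0`. -/
theorem Am_gHamiltonian_G1 (om ep ga : ℝ) :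
    (G1 ga).IsHermitian ∧ IsUnit (G1 ga) ∧
      (Am om ep ga)ᴴ * G1 ga + G1 ga * Am om ep ga = 0 := by
  refine ⟨?_, ?_, ?_⟩
  · ext i j
    fin_cases i <;> fin_cases j <;>
      simp [G1, Matrix.conjTranspose_apply, Complex.ext_iff, Matrix.vecHead, Matrix.vecTail]
  · exact (Matrix.isUnit_iff_isUnit_det _).mpr (Matrix.isUnit_det_of_right_inverse (G1_mul_G1inv ga))
  · have hA : (Am om ep ga)ᴴ =
      !![0, 0, -((om : ℂ) ^ 2), -(ep : ℂ);
         0, 0, -(ep : ℂ), -((om : ℂ) ^ 2);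
         1, 0, -2 * (ga : ℂ), 0;
         0, 1, 0, 2 * (ga : ℂ)] := by
      ext i j
      fin_cases i <;> fin_cases j <;>
        simp [Am, Matrix.conjTranspose_apply, Matrix.vecHead, Matrix.vecTail]
    rw [hA, Am, G1]
    ext i j
    fin_cases i <;> fin_cases j <;>
      simp [Matrix.mul_apply, Fin.sum_univ_four, Matrix.vecHead, Matrix.vecTail] <;> ring
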